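/- The number of valleyless sequences of length n of positive integers with maximum entry exactly k is the binomial coefficient C(n - 1 + 2(k-1), 2(k-1)). -/

import Mathlib

/-- A sequence of positive integers is valleyless if no entry is strictly below some
earlier entry and some later entry. -/
def SeqValleyless {n : ℕ} (s : Fin n → ℕ) : Prop :=
  ∀ i j k : Fin n, i < j → j < k → min (s i) (s k) ≤ s j


open Finset

namespace ValleylessAux


/-- cardinality of an initial-segment filter on `Fin K`. -/
lemma card_filter_val_lt (K t : ℕ) (h : t ≤ K) :
    (Finset.univ.filter fun v : Fin K => (v : ℕ) < t).card = t := by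
  have he : (Finset.univ.filter fun v : Fin K => (v : ℕ) < t)
      = (Finset.range t).attachFin (fun m hm => lt_of_lt_of_le (mem_range.1 hm) h) := by
    ext x
    simp [mem_attachFin]
  rw [he, card_attachFin, card_range]

/-- a downward-closed finset of `Fin K` is an initial segment. -/
lemma downward_mem_iff {K : ℕ} {S : Finset (Fin K)}
    (hS : ∀ v w : Fin K, v ≤ w → w ∈ S → v ∈ S) (v : Fin K) :
    v ∈ S ↔ (v : ℕ) < S.card := by
  constructor
  · intro hv
    have h1 : (Finset.univ.filter fun w : Fin K => (w : ℕ) < (v : ℕ) + 1) ⊆ S := by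
      intro w hw
      simp only [mem_filter, mem_univ, true_and] at hw
      exact hS w v (by rw [Fin.le_def]; omega) hv
    have := Finset.card_le_card h1
    rw [card_filter_val_lt K ((v : ℕ) + 1) v.isLt] at this
    omega
  · intro hv
    by_contra hmem
    have h1 : S ⊆ Finset.univ.filter fun w : Fin K => (w : ℕ) < (v : ℕ) := by
      intro w hw
      simp only [mem_filter, mem_univ, true_and]
      by_contra h
      push_neg at h
      exact hmem (hS v w (Fin.le_def.2 h) hw)
    have := Finset.card_le_card h1
    rw [card_filter_val_lt K (v : ℕ) (le_of_lt v.isLt)] at this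
    omega

/-- gap lemma for strictly monotone maps between `Fin`s. -/
lemma gap {m N : ℕ} {f : Fin m → Fin N} (hf : StrictMono f) :
    ∀ (d : ℕ) (i j : Fin m), (j : ℕ) = (i : ℕ) + d → (f i : ℕ) + d ≤ (f j : ℕ) := by
  intro d
  induction d with
  | zero =>
    intro i j h
    have : i = j := Fin.ext (by omega)
    subst this; simp
  | succ d ih =>
    intro i j h
    have hi1 : (i : ℕ) + 1 < m := by have := j.isLt; omega
    have h1 : (f i : ℕ) < f ⟨(i : ℕ) + 1, hi1⟩ := hf (by simp [Fin.lt_def])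
    have h2 := ih ⟨(i : ℕ) + 1, hi1⟩ j (by simp; omega)
    omega


variable {n K : ℕ}

lemma lt1 (v : Fin K) : (v : ℕ) < 2 * K := by have := v.isLt; omega
lemma lt2 (v : Fin K) : 2 * K - 1 - (v : ℕ) < 2 * K := by have := v.isLt; omega

/-- the set of levels whose interval contains `i`. -/
def cond (c : Fin (2 * K) → Fin n) (i : Fin n) : Finset (Fin K) :=
  Finset.univ.filter fun v =>
    (c ⟨v, lt1 v⟩ : ℕ) ≤ (i : ℕ) ∧ (i : ℕ) ≤ (c ⟨2 * K - 1 - v, lt2 v⟩ : ℕ)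

def toSeq (c : Fin (2 * K) → Fin n) : Fin n → ℕ := fun i => 1 + (cond c i).card

lemma cond_downward {c : Fin (2 * K) → Fin n} (hc : Monotone c) (i : Fin n) :
    ∀ v w : Fin K, v ≤ w → w ∈ cond c i → v ∈ cond c i := by
  intro v w hvw hw
  simp only [cond, mem_filter, mem_univ, true_and] at hw ⊢
  have h1 : c ⟨v, lt1 v⟩ ≤ c ⟨w, lt1 w⟩ := hc (Fin.mk_le_mk.2 (Fin.le_def.1 hvw))
  have h2 : c ⟨2 * K - 1 - w, lt2 w⟩ ≤ c ⟨2 * K - 1 - v, lt2 v⟩ := by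
    apply hc
    simp only [Fin.le_def]
    have := Fin.le_def.1 hvw
    omega
  rw [Fin.le_def] at h1 h2
  omega

lemma mem_cond_iff {c : Fin (2 * K) → Fin n} (hc : Monotone c) (v : Fin K) (i : Fin n) :
    v ∈ cond c i ↔ (v : ℕ) + 2 ≤ toSeq c i := by
  rw [downward_mem_iff (cond_downward hc i), toSeq]
  omega

lemma toSeq_pos (c : Fin (2 * K) → Fin n) (i : Fin n) : 0 < toSeq c i := by
  simp [toSeq]

lemma toSeq_le (c : Fin (2 * K) → Fin n) (i : Fin n) : toSeq c i ≤ K + 1 := by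
  have := Finset.card_le_univ (cond c i)
  simp only [card_univ, Fintype.card_fin] at this
  simp [toSeq]; omega

lemma toSeq_valleyless {c : Fin (2 * K) → Fin n} (hc : Monotone c) :
    SeqValleyless (toSeq c) := by
  intro i j l hij hjl
  have hinter : ∀ v : Fin K, v ∈ cond c i → v ∈ cond c l → v ∈ cond c j := by
    intro v hvi hvl
    simp only [cond, mem_filter, mem_univ, true_and] at hvi hvl ⊢
    have h1 := Fin.lt_def.1 hij
    have h2 := Fin.lt_def.1 hjl
    omega
  rcases le_total (cond c i).card (cond c l).card with h | h
  · have hs : cond c i ⊆ cond c j := by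
      intro v hv
      refine hinter v hv ?_
      rw [downward_mem_iff (cond_downward hc l)]
      have := (downward_mem_iff (cond_downward hc i) v).1 hv
      omega
    have := Finset.card_le_card hs
    simp only [toSeq]
    omega
  · have hs : cond c l ⊆ cond c j := by
      intro v hv
      refine hinter v ?_ hv
      rw [downward_mem_iff (cond_downward hc i)]
      have := (downward_mem_iff (cond_downward hc l) v).1 hv
      omega
    have := Finset.card_le_card hs
    simp only [toSeq]
    omega

lemma exists_toSeq_eq {c : Fin (2 * K) → Fin n} (hc : Monotone c) (hn : 0 < n) :
    ∃ i, toSeq c i = K + 1 := by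
  rcases Nat.eq_zero_or_pos K with hK | hK
  · subst hK
    refine ⟨⟨0, hn⟩, ?_⟩
    simp only [toSeq]
    have : (cond c ⟨0, hn⟩ : Finset (Fin 0)) = ∅ := Subsingleton.elim _ _
    rw [this]; simp
  · have hKlt : K - 1 < 2 * K := by omega
    refine ⟨c ⟨K - 1, hKlt⟩, ?_⟩
    have huniv : cond c (c ⟨K - 1, hKlt⟩) = Finset.univ := by
      ext v
      simp only [cond, mem_filter, mem_univ, true_and, iff_true]
      constructor
      · have : c ⟨(v : ℕ), lt1 v⟩ ≤ c ⟨K - 1, hKlt⟩ := by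
          apply hc; rw [Fin.mk_le_mk]; have := v.isLt; omega
        exact Fin.le_def.1 this
      · have : c ⟨K - 1, hKlt⟩ ≤ c ⟨2 * K - 1 - (v : ℕ), lt2 v⟩ := by
          apply hc; rw [Fin.mk_le_mk]; have := v.isLt; omega
        exact Fin.le_def.1 this
    simp [toSeq, huniv]
    omega

/-- the level-interval finset of `toSeq c` is an explicit `Icc`. -/
lemma levelSet_eq {c : Fin (2 * K) → Fin n} (hc : Monotone c) (v : Fin K) :
    (Finset.univ.filter fun i : Fin n => (v : ℕ) + 2 ≤ toSeq c i)
      = Finset.Icc (c ⟨v, lt1 v⟩) (c ⟨2 * K - 1 - v, lt2 v⟩) := by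
  ext i
  rw [mem_filter, Finset.mem_Icc, ← mem_cond_iff hc]
  simp only [cond, mem_filter, mem_univ, true_and, Fin.le_def]

lemma ends_le (c : Fin (2 * K) → Fin n) (hc : Monotone c) (v : Fin K) :
    c ⟨v, lt1 v⟩ ≤ c ⟨2 * K - 1 - v, lt2 v⟩ := by
  apply hc; rw [Fin.mk_le_mk]; have := v.isLt; omega

lemma toSeq_injective {c c' : Fin (2 * K) → Fin n} (hc : Monotone c) (hc' : Monotone c')
    (h : toSeq c = toSeq c') : c = c' := by
  have key : ∀ v : Fin K,
      c ⟨v, lt1 v⟩ = c' ⟨v, lt1 v⟩ ∧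
      c ⟨2 * K - 1 - v, lt2 v⟩ = c' ⟨2 * K - 1 - v, lt2 v⟩ := by
    intro v
    have hIcc : Finset.Icc (c ⟨v, lt1 v⟩) (c ⟨2 * K - 1 - v, lt2 v⟩)
        = Finset.Icc (c' ⟨v, lt1 v⟩) (c' ⟨2 * K - 1 - v, lt2 v⟩) := by
      rw [← levelSet_eq hc, ← levelSet_eq hc', h]
    have h1 : c ⟨v, lt1 v⟩ ∈ Finset.Icc (c' ⟨v, lt1 v⟩) (c' ⟨2 * K - 1 - v, lt2 v⟩) := by
      rw [← hIcc, Finset.mem_Icc]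
      exact ⟨le_refl _, ends_le c hc v⟩
    have h2 : c' ⟨v, lt1 v⟩ ∈ Finset.Icc (c ⟨v, lt1 v⟩) (c ⟨2 * K - 1 - v, lt2 v⟩) := by
      rw [hIcc, Finset.mem_Icc]
      exact ⟨le_refl _, ends_le c' hc' v⟩
    have h3 : c ⟨2 * K - 1 - v, lt2 v⟩ ∈ Finset.Icc (c' ⟨v, lt1 v⟩) (c' ⟨2*K-1-v, lt2 v⟩) := by
      rw [← hIcc, Finset.mem_Icc]
      exact ⟨ends_le c hc v, le_refl _⟩
    have h4 : c' ⟨2 * K - 1 - v, lt2 v⟩ ∈ Finset.Icc (c ⟨v, lt1 v⟩) (c ⟨2*K-1-v, lt2 v⟩) := by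
      rw [hIcc, Finset.mem_Icc]
      exact ⟨ends_le c' hc' v, le_refl _⟩
    rw [Finset.mem_Icc] at h1 h2 h3 h4
    exact ⟨le_antisymm h2.1 h1.1, le_antisymm h3.2 h4.2⟩
  funext w
  rcases lt_or_ge (w : ℕ) K with hw | hw
  · have := (key ⟨w, hw⟩).1
    convert this using 2
  · have hw2 : 2 * K - 1 - (w : ℕ) < K := by have := w.isLt; omega
    have := (key ⟨2 * K - 1 - (w : ℕ), hw2⟩).2
    have hww : (⟨2 * K - 1 - (2 * K - 1 - (w : ℕ)), lt2 ⟨2 * K - 1 - (w : ℕ), hw2⟩⟩ :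
        Fin (2 * K)) = w := by
      apply Fin.ext; simp only []; have := w.isLt; omega
    rwa [hww] at this


section Surj

variable {n K : ℕ} {s : Fin n → ℕ}

/-- the set of positions with value at least `v + 2`. -/
def aset (s : Fin n → ℕ) (v : Fin K) : Finset (Fin n) :=
  Finset.univ.filter fun i => (v : ℕ) + 2 ≤ s i

lemma aset_nonempty {i0 : Fin n} (hi0 : s i0 = K + 1) (v : Fin K) :
    (aset s v).Nonempty := by
  refine ⟨i0, ?_⟩
  simp only [aset, mem_filter, mem_univ, true_and, hi0]
  have := v.isLt; omega

lemma aset_subset {v w : Fin K} (hvw : v ≤ w) : aset s w ⊆ aset s v := by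
  intro i hi
  simp only [aset, mem_filter, mem_univ, true_and] at hi ⊢
  have := Fin.le_def.1 hvw
  omega

/-- the chain of interval endpoints associated to a valleyless sequence. -/
def cFor (s : Fin n → ℕ) (hne : ∀ v : Fin K, (aset s v).Nonempty) :
    Fin (2 * K) → Fin n := fun w =>
  if h : (w : ℕ) < K then (aset s ⟨w, h⟩).min' (hne _)
  else (aset s ⟨2 * K - 1 - (w : ℕ), by have := w.isLt; omega⟩).max' (hne _)

lemma cFor_monotone (hne : ∀ v : Fin K, (aset s v).Nonempty)
    {i0 : Fin n} (hi0 : s i0 = K + 1) : Monotone (cFor s hne) := by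
  have hmem : ∀ v : Fin K, i0 ∈ aset s v := by
    intro v
    simp only [aset, mem_filter, mem_univ, true_and, hi0]
    have := v.isLt; omega
  intro w1 w2 h12
  have h12' := Fin.le_def.1 h12
  unfold cFor
  rcases lt_or_ge (w1 : ℕ) K with h1 | h1 <;> rcases lt_or_ge (w2 : ℕ) K with h2 | h2
  · rw [dif_pos h1, dif_pos h2]
    exact Finset.min'_le _ _ (aset_subset (by rw [Fin.mk_le_mk]; omega)
      (Finset.min'_mem _ _))
  · rw [dif_pos h1, dif_neg (by omega)]
    calc (aset s ⟨w1, h1⟩).min' _ ≤ i0 := Finset.min'_le _ _ (hmem _)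
      _ ≤ _ := Finset.le_max' _ _ (hmem _)
  · omega
  · rw [dif_neg (by omega), dif_neg (by omega)]
    exact Finset.le_max' _ _ (aset_subset (by rw [Fin.mk_le_mk]; have := w2.isLt; omega)
      (Finset.max'_mem _ _))

lemma toSeq_cFor (hpos : ∀ i, 0 < s i) (hval : SeqValleyless s)
    (hle : ∀ i, s i ≤ K + 1) (hne : ∀ v : Fin K, (aset s v).Nonempty) :
    toSeq (cFor s hne) = s := by
  funext i
  have hcond : cond (cFor s hne) i = Finset.univ.filter fun v : Fin K => (v : ℕ) + 2 ≤ s i := by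
    ext v
    have hv1 : ((⟨(v : ℕ), lt1 v⟩ : Fin (2 * K)) : ℕ) < K := v.isLt
    have hv2 : ¬ ((⟨2 * K - 1 - (v : ℕ), lt2 v⟩ : Fin (2 * K)) : ℕ) < K := by
      simp only []; have := v.isLt; omega
    simp only [cond, mem_filter, mem_univ, true_and]
    rw [show (cFor s hne ⟨(v : ℕ), lt1 v⟩) = (aset s ⟨(v : ℕ), v.isLt⟩).min' (hne _) by
        unfold cFor; rw [dif_pos hv1],
      show (cFor s hne ⟨2 * K - 1 - (v : ℕ), lt2 v⟩)
          = (aset s ⟨2 * K - 1 - (2 * K - 1 - (v : ℕ)), by have := v.isLt; omega⟩).max'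
            (hne _) by unfold cFor; rw [dif_neg hv2]]
    have hvv : (⟨2 * K - 1 - (2 * K - 1 - (v : ℕ)), by have := v.isLt; omega⟩ : Fin K)
        = ⟨(v : ℕ), v.isLt⟩ := by apply Fin.ext; simp only []; have := v.isLt; omega
    rw [hvv]
    set a := (aset s ⟨(v : ℕ), v.isLt⟩).min' (hne _) with ha
    set b := (aset s ⟨(v : ℕ), v.isLt⟩).max' (hne _) with hb
    have hamem : a ∈ aset s ⟨(v : ℕ), v.isLt⟩ := Finset.min'_mem _ _
    have hbmem : b ∈ aset s ⟨(v : ℕ), v.isLt⟩ := Finset.max'_mem _ _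
    simp only [aset, mem_filter, mem_univ, true_and] at hamem hbmem
    constructor
    · rintro ⟨h1, h2⟩
      rcases eq_or_lt_of_le h1 with he | hlt
      · have : i = a := Fin.ext he.symm
        rw [this]; exact hamem
      · rcases eq_or_lt_of_le h2 with he | hlt2
        · have : i = b := Fin.ext he
          rw [this]; exact hbmem
        · have := hval a i b (Fin.lt_def.2 hlt) (Fin.lt_def.2 hlt2)
          omega
    · intro hsi
      have himem : i ∈ aset s ⟨(v : ℕ), v.isLt⟩ := by
        simp only [aset, mem_filter, mem_univ, true_and]; exact hsi
      exact ⟨Fin.le_def.1 (Finset.min'_le _ _ himem), Fin.le_def.1 (Finset.le_max' _ _ himem)⟩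
  have hcard : (Finset.univ.filter fun v : Fin K => (v : ℕ) + 2 ≤ s i).card = s i - 1 := by
    have : (Finset.univ.filter fun v : Fin K => (v : ℕ) + 2 ≤ s i)
        = Finset.univ.filter fun v : Fin K => (v : ℕ) < s i - 1 := by
      ext v; simp only [mem_filter, mem_univ, true_and]
      have := hpos i; omega
    rw [this, card_filter_val_lt K (s i - 1) (by have := hle i; omega)]
  rw [toSeq, hcond, hcard]
  have := hpos i; omega

end Surj


section Count

variable {n K : ℕ}

lemma emb_sub_lt (hn : 0 < n) (t : Finset (Fin (n - 1 + 2 * K))) (ht : t.card = 2 * K)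
    (v : Fin (2 * K)) : ((t.orderEmbOfFin ht) v : ℕ) - (v : ℕ) < n := by
  have hsm := (t.orderEmbOfFin ht).strictMono
  have hlast : 2 * K - 1 < 2 * K := by have := v.isLt; omega
  have h1 := gap hsm ((2 * K - 1) - (v : ℕ)) v ⟨2 * K - 1, hlast⟩
    (by simp only []; have := v.isLt; omega)
  have hb := (t.orderEmbOfFin ht ⟨2 * K - 1, hlast⟩).isLt
  have := v.isLt
  omega

def psiFun (t : Finset (Fin (n - 1 + 2 * K))) (ht : t.card = 2 * K) (hn : 0 < n) :
    Fin (2 * K) → Fin n := fun v =>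
  ⟨((t.orderEmbOfFin ht) v : ℕ) - (v : ℕ), emb_sub_lt hn t ht v⟩

lemma psiFun_mono (t : Finset (Fin (n - 1 + 2 * K))) (ht : t.card = 2 * K) (hn : 0 < n) :
    Monotone (psiFun t ht hn) := by
  intro v w hvw
  have hsm := (t.orderEmbOfFin ht).strictMono
  have h1 := gap hsm ((w : ℕ) - (v : ℕ)) v w (by have := Fin.le_def.1 hvw; omega)
  simp only [psiFun, Fin.mk_le_mk]
  have := Fin.le_def.1 hvw
  omega

lemma le_emb (t : Finset (Fin (n - 1 + 2 * K))) (ht : t.card = 2 * K) (v : Fin (2 * K)) :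
    (v : ℕ) ≤ ((t.orderEmbOfFin ht) v : ℕ) := by
  have := gap (t.orderEmbOfFin ht).strictMono (v : ℕ)
    ⟨0, by have := v.isLt; omega⟩ v (by simp)
  omega

lemma image_emb (t : Finset (Fin (n - 1 + 2 * K))) (ht : t.card = 2 * K) :
    t = Finset.univ.image (t.orderEmbOfFin ht) := by
  apply Finset.eq_of_subset_of_card_le
  · intro x hx
    rw [Finset.mem_image]
    have : x ∈ Set.range (t.orderEmbOfFin ht) := by
      rw [Finset.range_orderEmbOfFin]; exact hx
    rcases this with ⟨v, hv⟩
    exact ⟨v, Finset.mem_univ v, hv⟩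
  · apply le_trans (Finset.card_image_le)
    simp [ht]

lemma card_monotone (hn : 0 < n) :
    Nat.card {c : Fin (2 * K) → Fin n // Monotone c}
      = Nat.choose (n - 1 + 2 * K) (2 * K) := by
  have hbij : Function.Bijective
      (fun t : {t : Finset (Fin (n - 1 + 2 * K)) // t.card = 2 * K} =>
        (⟨psiFun t.1 t.2 hn, psiFun_mono t.1 t.2 hn⟩ :
          {c : Fin (2 * K) → Fin n // Monotone c})) := by
    constructor
    · rintro ⟨t, ht⟩ ⟨t', ht'⟩ heq
      simp only [Subtype.mk.injEq] at heq
      have hfun : ∀ v : Fin (2 * K), psiFun t ht hn v = psiFun t' ht' hn v :=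
        fun v => congrFun heq v
      have hemb : ∀ v : Fin (2 * K), (t.orderEmbOfFin ht) v = (t'.orderEmbOfFin ht') v := by
        intro v
        have h0 := congrArg Fin.val (hfun v)
        simp only [psiFun] at h0
        have h1 := le_emb t ht v
        have h2 := le_emb t' ht' v
        apply Fin.ext
        omega
      apply Subtype.ext
      show t = t'
      have hco : (⇑(t.orderEmbOfFin ht) : Fin (2 * K) → Fin (n - 1 + 2 * K))
          = ⇑(t'.orderEmbOfFin ht') := funext hemb
      rw [image_emb t ht, image_emb t' ht', hco]
    · rintro ⟨c, hc⟩
      have hf : ∀ v : Fin (2 * K), (c v : ℕ) + (v : ℕ) < n - 1 + 2 * K := by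
        intro v
        have h1 := (c v).isLt
        have h2 := v.isLt
        omega
      set f : Fin (2 * K) → Fin (n - 1 + 2 * K) := fun v => ⟨(c v : ℕ) + (v : ℕ), hf v⟩
        with hfdef
      have hsm : StrictMono f := by
        intro v w hvw
        simp only [hfdef, Fin.mk_lt_mk]
        have h1 := Fin.le_def.1 (hc (le_of_lt hvw))
        have h2 := Fin.lt_def.1 hvw
        omega
      have ht : (Finset.univ.image f).card = 2 * K := by
        rw [Finset.card_image_of_injective _ hsm.injective]
        simp
      refine ⟨⟨Finset.univ.image f, ht⟩, ?_⟩
      have hemb : f = (Finset.univ.image f).orderEmbOfFin ht := by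
        apply Finset.orderEmbOfFin_unique ht
        · intro v
          rw [Finset.mem_image]
          exact ⟨v, Finset.mem_univ v, rfl⟩
        · exact hsm
      apply Subtype.ext
      funext v
      apply Fin.ext
      have hv : (((Finset.univ.image f).orderEmbOfFin ht) v : ℕ) = (c v : ℕ) + (v : ℕ) := by
        rw [← hemb]
      simp only [psiFun, hv]
      omega
  rw [← Nat.card_eq_of_bijective _ hbij, Nat.card_eq_fintype_card,
    Fintype.card_finset_len, Fintype.card_fin]

end Count

end ValleylessAux



/-- The number of valleyless sequences of length `n` of positive integers with maximum
entry exactly `k` is `C(n - 1 + 2(k-1), 2(k-1))`. -/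
theorem valleyless_count (n k : ℕ) (hn : 1 ≤ n) (hk : 1 ≤ k) :
    Nat.card {s : Fin n → ℕ // (∀ i, 0 < s i) ∧ SeqValleyless s ∧
        (∀ i, s i ≤ k) ∧ (∃ i, s i = k)} =
      Nat.choose (n - 1 + 2 * (k - 1)) (2 * (k - 1)) := by
  obtain ⟨K, rfl⟩ : ∃ K, k = K + 1 := ⟨k - 1, by omega⟩
  simp only [Nat.add_sub_cancel]
  have hbij : Function.Bijective
      (fun c : {c : Fin (2 * K) → Fin n // Monotone c} =>
        (⟨ValleylessAux.toSeq c.1, fun i => ValleylessAux.toSeq_pos c.1 i,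
          ValleylessAux.toSeq_valleyless c.2, fun i => ValleylessAux.toSeq_le c.1 i,
          ValleylessAux.exists_toSeq_eq c.2 hn⟩ :
        {s : Fin n → ℕ // (∀ i, 0 < s i) ∧ SeqValleyless s ∧
          (∀ i, s i ≤ K + 1) ∧ (∃ i, s i = K + 1)})) := by
    constructor
    · rintro ⟨c, hc⟩ ⟨c', hc'⟩ heq
      simp only [Subtype.mk.injEq] at heq
      exact Subtype.ext (ValleylessAux.toSeq_injective hc hc' heq)
    · rintro ⟨s, hpos, hval, hle, i0, hi0⟩
      have hne : ∀ v : Fin K, (ValleylessAux.aset s v).Nonempty :=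
        fun v => ValleylessAux.aset_nonempty hi0 v
      refine ⟨⟨ValleylessAux.cFor s hne, ValleylessAux.cFor_monotone hne hi0⟩, ?_⟩
      exact Subtype.ext (ValleylessAux.toSeq_cFor hpos hval hle hne)
  rw [← Nat.card_eq_of_bijective _ hbij]
  exact ValleylessAux.card_monotone hn
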